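/- Assume G has the 4-cycle chord property and the 5-cycle chord property, the 10-cycle O is chordless, and w is a vertex of G whose images under the ten elements of the dihedral group generated by s and t are pairwise distinct. If w is adjacent to 6 consecutive vertices of O, then w is adjacent to 7 consecutive vertices of O. -/

import Mathlib

open Fin.NatCast in
theorem stmt15 {V : Type*} (G : SimpleGraph V)
    (hchord4 : ∀ w1 w2 w3 w4 : V, G.Adj w1 w2 → G.Adj w2 w3 → G.Adj w3 w4 →
      G.Adj w4 w1 → w1 ≠ w3 → w2 ≠ w4 → G.Adj w1 w3 ∨ G.Adj w2 w4)
    (hchord5 : ∀ w1 w2 w3 w4 w5 : V,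
      ([w1, w2, w3, w4, w5] : List V).Pairwise (· ≠ ·) →
      G.Adj w1 w2 → G.Adj w2 w3 → G.Adj w3 w4 → G.Adj w4 w5 → G.Adj w5 w1 →
      G.Adj w1 w3 ∨ G.Adj w2 w4 ∨ G.Adj w3 w5 ∨ G.Adj w4 w1 ∨ G.Adj w5 w2)
    (s t : G ≃g G)
    (hss : ∀ z, s (s z) = z) (htt : ∀ z, t (t z) = z)
    (hst5 : ∀ z : V, s (t (s (t (s (t (s (t (s (t (z)))))))))) = z)
    (v : V) (hvs : G.Adj v (s v)) (hvt : G.Adj v (t v))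
    (hdist : ([v, s v, s (t v), s (t (s v)), s (t (s (t v))), s (t (s (t (s v)))), s (t (s (t (s (t v))))), s (t (s (t (s (t (s v)))))), s (t (s (t (s (t (s (t v))))))), s (t (s (t (s (t (s (t (s v))))))))] : List V).Pairwise (· ≠ ·))
    (o : Fin 10 → V) (ho : o = ![v, s v, s (t v), s (t (s v)), s (t (s (t v))), s (t (s (t (s v)))), s (t (s (t (s (t v))))), s (t (s (t (s (t (s v)))))), s (t (s (t (s (t (s (t v))))))), s (t (s (t (s (t (s (t (s v))))))))])
    (hchordless : ∀ i j : Fin 10, i ≠ j → j ≠ i + 1 → i ≠ j + 1 → ¬ G.Adj (o i) (o j))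
    (w : V) (hworbit : ([w, s w, s (t w), s (t (s w)), s (t (s (t w))), s (t (s (t (s w)))), s (t (s (t (s (t w))))), s (t (s (t (s (t (s w)))))), s (t (s (t (s (t (s (t w))))))), s (t (s (t (s (t (s (t (s w))))))))] : List V).Pairwise (· ≠ ·))
    (hyp : ∃ i : Fin 10, ∀ m : ℕ, m < 6 → G.Adj w (o (i + (m : Fin 10)))) :
    ∃ i : Fin 10, ∀ m : ℕ, m < 7 → G.Adj w (o (i + (m : Fin 10))) := by
  obtain ⟨i, hw6⟩ := hyp
  -- basic mapping lemmas
  have hmapS : ∀ a b : V, G.Adj a b → G.Adj (s a) (s b) := fun a b h => s.map_adj_iff.mpr h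
  have hmapT : ∀ a b : V, G.Adj a b → G.Adj (t a) (t b) := fun a b h => t.map_adj_iff.mpr h
  -- an opaque name for the rotation by 2
  obtain ⟨R, hR⟩ : ∃ R : V → V, ∀ z, R z = s (t z) := ⟨_, fun _ => rfl⟩
  have hmapR : ∀ a b : V, G.Adj a b → G.Adj (R a) (R b) := by
    intro a b h; rw [hR, hR]; exact hmapS _ _ (hmapT _ _ h)
  have hmapRinv : ∀ a b : V, G.Adj a b → G.Adj (t (s a)) (t (s b)) := by
    intro a b h; exact hmapT _ _ (hmapS _ _ h)
  have hR5 : ∀ z : V, R (R (R (R (R z)))) = z := by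
    intro z; simp only [hR]; exact hst5 z
  have hRinv : ∀ z : V, t (s (R z)) = z := by
    intro z; rw [hR, hss]; exact htt z
  -- rotation acts on the cycle
  have hRo : ∀ j : Fin 10, R (o j) = o (j + 2) := by
    intro j; rw [hR]; subst ho; fin_cases j
    · rfl
    · rfl
    · rfl
    · rfl
    · rfl
    · rfl
    · rfl
    · rfl
    · exact hst5 v
    · exact hst5 (s v)
  have hRinvo : ∀ j : Fin 10, t (s (o j)) = o (j + 8) := by
    intro j
    have h3 : R (o (j + 8)) = o j := by
      rw [hRo, add_assoc, show ((8 : Fin 10) + 2) = 0 by decide, add_zero]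
    rw [← h3]; exact hRinv _
  -- edges of the cycle
  have hedge : ∀ j : Fin 10, G.Adj (o j) (o (j + 1)) := by
    intro j; subst ho; fin_cases j
    · exact hvs
    · exact hmapS _ _ hvt
    · exact hmapS _ _ (hmapT _ _ hvs)
    · exact hmapS _ _ (hmapT _ _ (hmapS _ _ hvt))
    · exact hmapS _ _ (hmapT _ _ (hmapS _ _ (hmapT _ _ hvs)))
    · exact hmapS _ _ (hmapT _ _ (hmapS _ _ (hmapT _ _ (hmapS _ _ hvt))))
    · exact hmapS _ _ (hmapT _ _ (hmapS _ _ (hmapT _ _ (hmapS _ _ (hmapT _ _ hvs)))))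
    · exact hmapS _ _ (hmapT _ _ (hmapS _ _ (hmapT _ _ (hmapS _ _ (hmapT _ _ (hmapS _ _ hvt))))))
    · exact hmapS _ _ (hmapT _ _ (hmapS _ _ (hmapT _ _ (hmapS _ _ (hmapT _ _ (hmapS _ _ (hmapT _ _ hvs)))))))
    · have h := hmapS _ _ (hmapT _ _ (hmapS _ _ (hmapT _ _ (hmapS _ _ (hmapT _ _ (hmapS _ _ (hmapT _ _ (hmapS _ _ hvt))))))))
      rw [hst5 v] at h; exact h
  -- injectivity of o
  have hoinj : Function.Injective o := by
    refine List.nodup_ofFn.mp ?_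
    rw [ho]
    simp only [List.ofFn_succ, Matrix.cons_val_zero, Matrix.cons_val_succ, List.ofFn_zero]
    exact hdist
  -- fin arithmetic helper
  have hadd : ∀ (a b c : Fin 10), a + b = c → i + a + b = i + c := by
    intro a b c h; rw [add_assoc, h]
  -- no-chord helper
  have hnadj : ∀ (a b : Fin 10), a ≠ b → b ≠ a + 1 → a ≠ b + 1 →
      ¬ G.Adj (o (i + a)) (o (i + b)) := by
    intro a b h1 h2 h3
    refine hchordless (i + a) (i + b) (fun he => h1 (add_left_cancel he))
      (fun he => h2 (add_left_cancel (by rwa [add_assoc] at he)))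
      (fun he => h3 (add_left_cancel (by rwa [add_assoc] at he)))
  -- adjacency of w to the arc, Fin-indexed
  have hw : ∀ a : Fin 10, a.val < 6 → G.Adj w (o (i + a)) := by
    intro a ha
    have h := hw6 a.val ha
    rwa [Fin.cast_val_eq_self] at h
  -- injectivity of the orbit of w
  have hwinj : Function.Injective (![w, s w, s (t w), s (t (s w)), s (t (s (t w))),
      s (t (s (t (s w)))), s (t (s (t (s (t w))))), s (t (s (t (s (t (s w)))))),
      s (t (s (t (s (t (s (t w))))))), s (t (s (t (s (t (s (t (s w))))))))] : Fin 10 → V) := by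
    refine List.nodup_ofFn.mp ?_
    simp only [List.ofFn_succ, Matrix.cons_val_zero, Matrix.cons_val_succ, List.ofFn_zero]
    exact hworbit
  have hW0 : (![w, s w, s (t w), s (t (s w)), s (t (s (t w))),
      s (t (s (t (s w)))), s (t (s (t (s (t w))))), s (t (s (t (s (t (s w)))))),
      s (t (s (t (s (t (s (t w))))))), s (t (s (t (s (t (s (t (s w))))))))] : Fin 10 → V) 0 = w := rfl
  have hW2 : (![w, s w, s (t w), s (t (s w)), s (t (s (t w))),
      s (t (s (t (s w)))), s (t (s (t (s (t w))))), s (t (s (t (s (t (s w)))))),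
      s (t (s (t (s (t (s (t w))))))), s (t (s (t (s (t (s (t (s w))))))))] : Fin 10 → V) 2 = R w := by
    rw [hR]; rfl
  have hW4 : (![w, s w, s (t w), s (t (s w)), s (t (s (t w))),
      s (t (s (t (s w)))), s (t (s (t (s (t w))))), s (t (s (t (s (t (s w)))))),
      s (t (s (t (s (t (s (t w))))))), s (t (s (t (s (t (s (t (s w))))))))] : Fin 10 → V) 4
      = R (R w) := by
    rw [hR, hR]; rfl
  have hW6 : (![w, s w, s (t w), s (t (s w)), s (t (s (t w))),
      s (t (s (t (s w)))), s (t (s (t (s (t w))))), s (t (s (t (s (t (s w)))))),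
      s (t (s (t (s (t (s (t w))))))), s (t (s (t (s (t (s (t (s w))))))))] : Fin 10 → V) 6
      = R (R (R w)) := by
    rw [hR, hR, hR]; rfl
  have hW8 : (![w, s w, s (t w), s (t (s w)), s (t (s (t w))),
      s (t (s (t (s w)))), s (t (s (t (s (t w))))), s (t (s (t (s (t (s w)))))),
      s (t (s (t (s (t (s (t w))))))), s (t (s (t (s (t (s (t (s w))))))))] : Fin 10 → V) 8
      = R (R (R (R w))) := by
    rw [hR, hR, hR, hR]; rfl
  have hne : ∀ (a b : Fin 10) (x y : V),
      (![w, s w, s (t w), s (t (s w)), s (t (s (t w))),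
      s (t (s (t (s w)))), s (t (s (t (s (t w))))), s (t (s (t (s (t (s w)))))),
      s (t (s (t (s (t (s (t w))))))), s (t (s (t (s (t (s (t (s w))))))))] : Fin 10 → V) a = x →
      (![w, s w, s (t w), s (t (s w)), s (t (s (t w))),
      s (t (s (t (s w)))), s (t (s (t (s (t w))))), s (t (s (t (s (t (s w)))))),
      s (t (s (t (s (t (s (t w))))))), s (t (s (t (s (t (s (t (s w))))))))] : Fin 10 → V) b = y →
      a ≠ b → x ≠ y := by
    intro a b x y hx hy hab h
    exact hab (hwinj (by rw [hx, hy, h]))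
  -- step 2 : w is adjacent to R w
  have A2 : G.Adj (R w) (o (i + 2)) := by
    have h := hmapR _ _ (hw 0 (by decide))
    rwa [hRo, hadd 0 2 2 (by decide)] at h
  have A3 : G.Adj (R w) (o (i + 5)) := by
    have h := hmapR _ _ (hw 3 (by decide))
    rwa [hRo, hadd 3 2 5 (by decide)] at h
  have e1 : G.Adj w (R w) := by
    rcases hchord4 w (o (i + 2)) (R w) (o (i + 5)) (hw 2 (by decide)) A2.symm A3
      (hw 5 (by decide)).symm (hne 0 2 _ _ hW0 hW2 (by decide))
      (fun h => hoinj h |> fun he => by simpa using add_left_cancel he) with h | h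
    · exact h
    · exact absurd h (hnadj 2 5 (by decide) (by decide) (by decide))
  have e2 : G.Adj (R w) (R (R w)) := hmapR _ _ e1
  have e3 : G.Adj (R (R w)) (R (R (R w))) := hmapR _ _ e2
  have e4 : G.Adj (R (R (R w))) (R (R (R (R w)))) := hmapR _ _ e3
  have e5 : G.Adj (R (R (R (R w)))) w := by
    have h := hmapR _ _ e4
    rwa [hR5] at h
  -- step 3 : w is adjacent to R (R w)
  have hpw : ([w, R w, R (R w), R (R (R w)), R (R (R (R w)))] : List V).Pairwise (· ≠ ·) := by
    refine List.Pairwise.cons ?_ (List.Pairwise.cons ?_ (List.Pairwise.cons ?_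
      (List.Pairwise.cons ?_ (List.pairwise_singleton _ _))))
    · intro x hx
      simp only [List.mem_cons, List.mem_singleton, List.not_mem_nil, or_false] at hx
      rcases hx with h | h | h | h
      · subst h; exact hne 0 2 _ _ hW0 hW2 (by decide)
      · subst h; exact hne 0 4 _ _ hW0 hW4 (by decide)
      · subst h; exact hne 0 6 _ _ hW0 hW6 (by decide)
      · subst h; exact hne 0 8 _ _ hW0 hW8 (by decide)
    · intro x hx
      simp only [List.mem_cons, List.mem_singleton, List.not_mem_nil, or_false] at hx
      rcases hx with h | h | h
      · subst h; exact hne 2 4 _ _ hW2 hW4 (by decide)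
      · subst h; exact hne 2 6 _ _ hW2 hW6 (by decide)
      · subst h; exact hne 2 8 _ _ hW2 hW8 (by decide)
    · intro x hx
      simp only [List.mem_cons, List.mem_singleton, List.not_mem_nil, or_false] at hx
      rcases hx with h | h
      · subst h; exact hne 4 6 _ _ hW4 hW6 (by decide)
      · subst h; exact hne 4 8 _ _ hW4 hW8 (by decide)
    · intro x hx
      simp only [List.mem_singleton] at hx
      subst hx; exact hne 6 8 _ _ hW6 hW8 (by decide)
  have e13 : G.Adj w (R (R w)) := by
    rcases hchord5 w (R w) (R (R w)) (R (R (R w))) (R (R (R (R w)))) hpw e1 e2 e3 e4 e5 with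
      h | h | h | h | h
    · exact h
    · have h' := hmapRinv _ _ h
      rw [hRinv, hRinv] at h'
      exact h'
    · have h' := hmapRinv _ _ h
      rw [hRinv, hRinv] at h'
      have h'' := hmapRinv _ _ h'
      rw [hRinv, hRinv] at h''
      exact h''
    · have h' := hmapR _ _ (hmapR _ _ h)
      rwa [hR5] at h'
    · have h' := hmapR _ _ h
      rwa [hR5] at h'
  -- step 4 : the decisive 4-cycle  w, o i, o (i+9), R (R w)
  have B1 : G.Adj w (o i) := by
    have h := hw 0 (by decide); rwa [add_zero] at h
  have B2 : G.Adj (o i) (o (i + 9)) := by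
    have h := hedge (i + 9)
    rw [add_assoc, show ((9 : Fin 10) + 1) = 0 by decide, add_zero] at h
    exact h.symm
  have B3 : G.Adj (R (R w)) (o (i + 9)) := by
    have h := hmapR _ _ (hw 5 (by decide))
    rw [hRo, hadd 5 2 7 (by decide)] at h
    have h' := hmapR _ _ h
    rwa [hRo, hadd 7 2 9 (by decide)] at h'
  have hRw6 : G.Adj (R (R w)) (o (i + 6)) := by
    have h := hmapR _ _ (hw 2 (by decide))
    rw [hRo, hadd 2 2 4 (by decide)] at h
    have h' := hmapR _ _ h
    rwa [hRo, hadd 4 2 6 (by decide)] at h'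
  have ne1 : w ≠ o (i + 9) := by
    intro h
    have ha := hw 1 (by decide)
    rw [h] at ha
    exact hnadj 9 1 (by decide) (by decide) (by decide) ha
  have ne2 : o i ≠ R (R w) := by
    intro h
    have ha : G.Adj (o (i + 0)) (o (i + 6)) := by
      rw [add_zero, h]; exact hRw6
    exact hnadj 0 6 (by decide) (by decide) (by decide) ha
  rcases hchord4 w (o i) (o (i + 9)) (R (R w)) B1 B2 B3.symm e13.symm ne1 ne2 with h | h
  · -- w adjacent to o (i+9) : seven in a row starting at i+9
    refine ⟨i + 9, ?_⟩
    intro m hm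
    interval_cases m
    · rw [hadd 9 _ 9 (by decide)]; exact h
    · rw [hadd 9 _ 0 (by decide)]; exact hw 0 (by decide)
    · rw [hadd 9 _ 1 (by decide)]; exact hw 1 (by decide)
    · rw [hadd 9 _ 2 (by decide)]; exact hw 2 (by decide)
    · rw [hadd 9 _ 3 (by decide)]; exact hw 3 (by decide)
    · rw [hadd 9 _ 4 (by decide)]; exact hw 4 (by decide)
    · rw [hadd 9 _ 5 (by decide)]; exact hw 5 (by decide)
  · -- o i adjacent to R (R w) : pull back, w adjacent to o (i+6)
    have h1 := hmapRinv _ _ h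
    rw [hRinvo, hRinv] at h1
    have h2 := hmapRinv _ _ h1
    rw [hRinvo, hRinv, hadd 8 8 6 (by decide)] at h2
    refine ⟨i, ?_⟩
    intro m hm
    rcases Nat.lt_or_ge m 6 with hm6 | hm6
    · exact hw6 m hm6
    · have : m = 6 := by omega
      subst this
      rw [show ((6 : ℕ) : Fin 10) = 6 by decide]
      exact h2.symm
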